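/- Let q ≥ 3 be an odd integer, write c = cos(π/q), s = sin(π/q), t = tan(π/q), and let M, m > 0 satisfy m/M = t². Given incident velocities V_in > v_in > 0, define the outgoing velocities by V_out = −c·V_in − t·s·v_in and v_out = −c·(V_in − v_in). Then: (i) kinetic energy is conserved, M·V_out² + m·v_out² = M·V_in² + m·v_in²; (ii) the superintegrable invariant is conserved, Re((V_out + i·t·v_out)^q) = Re((V_in + i·t·v_in)^q); and (iii) the outgoing state satisfies the ordering V_out < v_out < 0. -/

import Mathlib

/-- Odd superintegrable case `q` odd, `m/M = tan²(π/q)`: for incident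
velocities `V_in > v_in > 0`, the outgoing velocities
`V_out = −cos(π/q)·V_in − tan(π/q)·sin(π/q)·v_in`,
`v_out = −cos(π/q)·(V_in − v_in)` conserve the kinetic energy and the
superintegrable invariant `Re((V + i·tan(π/q)·v)^q)`, and satisfy the
outgoing ordering `V_out < v_out < 0`. -/
theorem galperin_odd_superintegrable_outgoing
    (q : ℕ) (hq : 3 ≤ q) (hodd : Odd q)
    (c s t M m Vin vin Vout vout : ℝ)
    (hc : c = Real.cos (Real.pi / q)) (hs : s = Real.sin (Real.pi / q))
    (ht : t = Real.tan (Real.pi / q))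
    (hM : 0 < M) (hm : 0 < m) (hratio : m / M = t ^ 2)
    (hvin : 0 < vin) (hVin : vin < Vin)
    (hVout : Vout = -c * Vin - t * s * vin)
    (hvout : vout = -c * (Vin - vin)) :
    M * Vout ^ 2 + m * vout ^ 2 = M * Vin ^ 2 + m * vin ^ 2 ∧
    (((Vout : ℂ) + Complex.I * (t : ℝ) * (vout : ℂ)) ^ q).re
      = (((Vin : ℂ) + Complex.I * (t : ℝ) * (vin : ℂ)) ^ q).re ∧
    Vout < vout ∧ vout < 0 := by
  have hqR : (0:ℝ) < q := by positivity
  set θ : ℝ := Real.pi / q with hθ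
  have hθpos : 0 < θ := div_pos Real.pi_pos hqR
  have hθlt : θ < Real.pi / 2 := by
    have h2q : (2:ℝ) < q := by exact_mod_cast by omega
    exact div_lt_div_of_pos_left Real.pi_pos (by norm_num) h2q
  have hcpos : 0 < c := by
    rw [hc]; exact Real.cos_pos_of_mem_Ioo ⟨by linarith, hθlt⟩
  have hspos : 0 < s := by
    rw [hs]; exact Real.sin_pos_of_pos_of_lt_pi hθpos (by linarith [Real.pi_pos])
  have hc0 : c ≠ 0 := ne_of_gt hcpos
  have htc : t * c = s := by
    rw [ht, hc, hs, Real.tan_eq_sin_div_cos]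
    rw [div_mul_cancel₀]
    rw [← hc]; exact hc0
  have hsc : s ^ 2 + c ^ 2 = 1 := by
    rw [hs, hc]; exact Real.sin_sq_add_cos_sq _
  have hmM : m = M * t ^ 2 := by
    have := hratio
    field_simp at this
    linarith
  refine ⟨?_, ?_, ?_, ?_⟩
  · -- energy conservation
    rw [hVout, hvout, hmM]
    linear_combination (M*Vin^2 + M*t^2*vin^2) * hsc
      + (M*Vin^2*(t*c+s) - 2*M*t*c*Vin*vin) * htc
  · -- invariant conservation
    have htcC : (t:ℂ) * (c:ℂ) = (s:ℂ) := by exact_mod_cast htc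
    have hzout : ((Vout : ℂ) + Complex.I * (t : ℝ) * (vout : ℂ))
        = -((c:ℂ) + Complex.I * (s:ℂ)) *
          (starRingEnd ℂ) ((Vin : ℂ) + Complex.I * (t : ℝ) * (vin : ℂ)) := by
      rw [hVout, hvout]
      simp only [map_add, map_mul, Complex.conj_ofReal, Complex.conj_I]
      push_cast
      linear_combination (-Complex.I * (Vin:ℂ)) * htcC
        + (-(s:ℂ)*(t:ℂ)*(vin:ℂ)) * Complex.I_sq
    have hrotbase : ((c:ℂ) + Complex.I * (s:ℂ)) = Complex.exp ((θ:ℝ) * Complex.I) := by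
      rw [Complex.exp_mul_I, hc, hs]
      push_cast
      ring
    have hrot : (-((c:ℂ) + Complex.I * (s:ℂ))) ^ q = 1 := by
      rw [neg_pow, hrotbase, ← Complex.exp_nat_mul, hodd.neg_one_pow]
      have hqC : (q : ℂ) ≠ 0 := by
        exact_mod_cast (ne_of_gt hqR)
      have hangle : (q : ℂ) * ((θ:ℝ) * Complex.I) = Real.pi * Complex.I := by
        rw [hθ]
        push_cast
        field_simp
      rw [hangle, Complex.exp_pi_mul_I]
      ring
    rw [hzout, mul_pow, hrot, one_mul, ← map_pow, Complex.conj_re]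
  · -- Vout < vout
    have hts : t * s = s ^ 2 / c := by
      field_simp
      linear_combination htc
    have h1 : Vout - vout = -((s ^ 2 / c + c) * vin) := by
      rw [hVout, hvout, hts]; ring
    have h2 : 0 < (s ^ 2 / c + c) * vin := by positivity
    linarith [h1 ▸ (neg_neg_iff_pos.mpr h2 : -((s ^ 2 / c + c) * vin) < 0)]
  · -- vout < 0
    rw [hvout]
    have : 0 < c * (Vin - vin) := mul_pos hcpos (by linarith)
    linarith
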